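/- arXiv:2508.11432 — 3 statements merged into one kernel-verified Lean document; each statement's English description precedes it below -/
import Mathlib

section
/- Let W be an n×n real matrix, ρ > 0, and 0 < κ̲ ≤ κ̄. Suppose that for every index i, -ρ - 2κ̲ W_{ii} - κ̄ Σ_{j≠i}(|W_{ij}| + |W_{ji}|) > 0. Then for any diagonal matrix J with diagonal entries J_{ii} ∈ [κ̲, κ̄], the matrix -ρI - JW - WᵀJ is positive definite. -/
open Finset Matrix

lemma amgm_abs (a b c : ℝ) : -(|b| * (a ^ 2 + c ^ 2) / 2) ≤ a * (b * c) := by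
  have h2 : |a| * |c| ≤ (a ^ 2 + c ^ 2) / 2 := by
    nlinarith [sq_nonneg (|a| - |c|), sq_abs a, sq_abs c]
  have h1 : |a * (b * c)| ≤ |b| * (a ^ 2 + c ^ 2) / 2 := by
    have he : |a * (b * c)| = |b| * (|a| * |c|) := by
      rw [abs_mul, abs_mul]; ring
    rw [he]
    nlinarith [abs_nonneg b]
  linarith [neg_abs_le (a * (b * c))]

lemma posDef_of_dominant {n : ℕ} (A : Matrix (Fin n) (Fin n) ℝ)
    (hsym : A.IsHermitian)
    (h : ∀ i, ∑ j ∈ Finset.univ.erase i, (|A i j| + |A j i|) < 2 * A i i) :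
    A.PosDef := by
  refine Matrix.posDef_iff_dotProduct_mulVec.mpr ⟨hsym, fun x hx => ?_⟩
  have hq : star x ⬝ᵥ (A *ᵥ x) = ∑ i, ∑ j, x i * (A i j * x j) := by
    simp [dotProduct, mulVec, Finset.mul_sum]
  rw [hq]
  set c : Fin n → ℝ := fun i =>
    A i i - (∑ j ∈ Finset.univ.erase i, (|A i j| + |A j i|)) / 2 with hc
  set T : ℝ := ∑ i, ∑ j ∈ Finset.univ.erase i, (|A i j| * (x i ^ 2 + x j ^ 2) / 2)
    with hTdef
  have hswap :
      (∑ i, ∑ j ∈ Finset.univ.erase i, (|A j i| / 2 * x i ^ 2))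
        = ∑ i, ∑ j ∈ Finset.univ.erase i, (|A i j| / 2 * x j ^ 2) := by
    rw [Finset.sum_comm' (s' := fun j => Finset.univ.erase j) (t' := Finset.univ)
      (by intro i j; simp [ne_comm, and_comm])]
  have hT : ∑ i, c i * x i ^ 2 = (∑ i, A i i * x i ^ 2) - T := by
    have e1 : ∑ i, c i * x i ^ 2
        = (∑ i, A i i * x i ^ 2)
          - ∑ i, ∑ j ∈ Finset.univ.erase i,
              (|A i j| / 2 * x i ^ 2 + |A j i| / 2 * x i ^ 2) := by
      rw [← Finset.sum_sub_distrib]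
      refine Finset.sum_congr rfl fun i _ => ?_
      simp only [hc]
      rw [Finset.sum_add_distrib (f := fun j => |A i j| / 2 * x i ^ 2)
            (g := fun j => |A j i| / 2 * x i ^ 2)]
      rw [show (∑ j ∈ Finset.univ.erase i, |A i j| / 2 * x i ^ 2)
            = (∑ j ∈ Finset.univ.erase i, |A i j|) / 2 * x i ^ 2 by
          rw [Finset.sum_div, Finset.sum_mul],
        show (∑ j ∈ Finset.univ.erase i, |A j i| / 2 * x i ^ 2)
            = (∑ j ∈ Finset.univ.erase i, |A j i|) / 2 * x i ^ 2 by
          rw [Finset.sum_div, Finset.sum_mul]]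
      rw [Finset.sum_add_distrib (f := fun j => |A i j|) (g := fun j => |A j i|)]
      ring
    rw [e1, hTdef]
    congr 1
    rw [show (∑ i, ∑ j ∈ Finset.univ.erase i,
          (|A i j| / 2 * x i ^ 2 + |A j i| / 2 * x i ^ 2))
        = (∑ i, ∑ j ∈ Finset.univ.erase i, (|A i j| / 2 * x i ^ 2))
          + ∑ i, ∑ j ∈ Finset.univ.erase i, (|A j i| / 2 * x i ^ 2) by
        rw [← Finset.sum_add_distrib]
        exact Finset.sum_congr rfl fun i _ => Finset.sum_add_distrib]
    rw [hswap, ← Finset.sum_add_distrib]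
    refine Finset.sum_congr rfl fun i _ => ?_
    rw [← Finset.sum_add_distrib]
    exact Finset.sum_congr rfl fun j _ => by ring
  have hmain : (∑ i, A i i * x i ^ 2) - T ≤ ∑ i, ∑ j, x i * (A i j * x j) := by
    have hrhs : ∑ i, ∑ j, x i * (A i j * x j)
        = (∑ i, A i i * x i ^ 2)
          + ∑ i, ∑ j ∈ Finset.univ.erase i, x i * (A i j * x j) := by
      rw [← Finset.sum_add_distrib]
      refine Finset.sum_congr rfl fun i _ => ?_
      rw [← Finset.add_sum_erase _ _ (Finset.mem_univ i)]
      ring_nf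
    rw [hrhs]
    have hbound : -T ≤ ∑ i, ∑ j ∈ Finset.univ.erase i, x i * (A i j * x j) := by
      rw [hTdef, ← Finset.sum_neg_distrib]
      refine Finset.sum_le_sum fun i _ => ?_
      rw [← Finset.sum_neg_distrib]
      exact Finset.sum_le_sum fun j _ => amgm_abs (x i) (A i j) (x j)
    linarith
  have hpos : 0 < ∑ i, c i * x i ^ 2 := by
    obtain ⟨k, hk⟩ := Function.ne_iff.mp hx
    have hcpos : ∀ i, 0 < c i := fun i => by
      have := h i; rw [hc]; dsimp only; linarith
    refine Finset.sum_pos' (fun i _ => ?_) ⟨k, Finset.mem_univ k, ?_⟩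
    · exact mul_nonneg (hcpos i).le (sq_nonneg _)
    · have hk' : x k ≠ 0 := by simpa using hk
      exact mul_pos (hcpos k) (lt_of_le_of_ne (sq_nonneg _) (Ne.symm (pow_ne_zero 2 hk')))
  linarith [hT, hmain, hpos]

theorem stmt_2 {n : ℕ} (W : Matrix (Fin n) (Fin n) ℝ) (ρ κl κu : ℝ)
    (hρ : 0 < ρ) (hκl : 0 < κl) (hκ : κl ≤ κu)
    (hW : ∀ i, 0 < -ρ - 2 * κl * W i i -
      κu * ∑ j ∈ Finset.univ.erase i, (|W i j| + |W j i|)) :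
    ∀ J : Matrix (Fin n) (Fin n) ℝ, (∀ i j, i ≠ j → J i j = 0) →
      (∀ i, J i i ∈ Set.Icc κl κu) →
      ((-ρ) • (1 : Matrix (Fin n) (Fin n) ℝ) - J * W - Wᵀ * J).PosDef := by
  intro J hJdiag hJbound
  set A := (-ρ) • (1 : Matrix (Fin n) (Fin n) ℝ) - J * W - Wᵀ * J with hA
  have hJW : ∀ i j, (J * W) i j = J i i * W i j := by
    intro i j
    rw [Matrix.mul_apply]
    rw [Finset.sum_eq_single i]
    · intro k _ hk; rw [hJdiag i k (Ne.symm hk), zero_mul]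
    · intro hi; exact absurd (Finset.mem_univ i) hi
  have hWJ : ∀ i j, (Wᵀ * J) i j = W j i * J j j := by
    intro i j
    rw [Matrix.mul_apply, Finset.sum_eq_single j]
    · rw [Matrix.transpose_apply]
    · intro k _ hk; rw [hJdiag k j hk, mul_zero]
    · intro hj; exact absurd (Finset.mem_univ j) hj
  have hAentry : ∀ i j, A i j = -ρ * (1 : Matrix (Fin n) (Fin n) ℝ) i j
      - J i i * W i j - W j i * J j j := by
    intro i j
    rw [hA]
    simp [Matrix.sub_apply, Matrix.smul_apply, hJW, hWJ, smul_eq_mul]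
  have hAdiag : ∀ i, A i i = -ρ - 2 * (J i i * W i i) := by
    intro i
    rw [hAentry, Matrix.one_apply_eq]
    ring
  have hAoff : ∀ i j, i ≠ j → A i j = -(J i i * W i j) - W j i * J j j := by
    intro i j hij
    rw [hAentry, Matrix.one_apply_ne hij]
    ring
  have hsym : A.IsHermitian := by
    ext i j
    simp only [conjTranspose_apply, star_trivial]
    rw [hAentry, hAentry]
    rcases eq_or_ne i j with rfl | hij
    · ring
    · rw [Matrix.one_apply_ne hij, Matrix.one_apply_ne (Ne.symm hij)]
      ring
  refine posDef_of_dominant A hsym fun i => ?_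
  have hJi := hJbound i
  obtain ⟨hJil, hJiu⟩ := hJi
  have hWnn : (0:ℝ) ≤ ∑ j ∈ Finset.univ.erase i, (|W i j| + |W j i|) :=
    Finset.sum_nonneg fun j _ => by positivity
  have hWi := hW i
  have hWii : W i i < 0 := by nlinarith
  have habs : ∀ j, j ≠ i → |A i j| + |A j i| ≤ 2 * (κu * (|W i j| + |W j i|)) := by
    intro j hji
    obtain ⟨hJjl, hJju⟩ := hJbound j
    have h1 : |A i j| ≤ κu * (|W i j| + |W j i|) := by
      rw [hAoff i j (Ne.symm hji)]
      calc |-(J i i * W i j) - W j i * J j j| ≤ |J i i * W i j| + |W j i * J j j| := by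
            rw [sub_eq_add_neg, ← abs_neg (W j i * J j j)]
            exact (abs_add_le _ _).trans (by rw [abs_neg])
        _ ≤ κu * |W i j| + κu * |W j i| := by
            rw [abs_mul, abs_mul, abs_of_nonneg (le_trans hκl.le hJil),
              abs_of_nonneg (le_trans hκl.le hJjl)]
            nlinarith [abs_nonneg (W i j), abs_nonneg (W j i)]
        _ = κu * (|W i j| + |W j i|) := by ring
    have h2 : |A j i| ≤ κu * (|W i j| + |W j i|) := by
      rw [hAoff j i hji]
      calc |-(J j j * W j i) - W i j * J i i| ≤ |J j j * W j i| + |W i j * J i i| := by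
            rw [sub_eq_add_neg, ← abs_neg (W i j * J i i)]
            exact (abs_add_le _ _).trans (by rw [abs_neg])
        _ ≤ κu * |W j i| + κu * |W i j| := by
            rw [abs_mul, abs_mul, abs_of_nonneg (le_trans hκl.le hJjl),
              abs_of_nonneg (le_trans hκl.le hJil)]
            nlinarith [abs_nonneg (W i j), abs_nonneg (W j i)]
        _ = κu * (|W i j| + |W j i|) := by ring
    linarith
  have hsum : ∑ j ∈ Finset.univ.erase i, (|A i j| + |A j i|)
      ≤ 2 * (κu * ∑ j ∈ Finset.univ.erase i, (|W i j| + |W j i|)) := by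
    rw [Finset.mul_sum, Finset.mul_sum]
    exact Finset.sum_le_sum fun j hj => habs j (Finset.ne_of_mem_erase hj)
  rw [hAdiag]
  have hdiag : -ρ - 2 * κl * W i i ≤ -ρ - 2 * (J i i * W i i) := by nlinarith
  nlinarith
end

section
/- Let f : ℝⁿ × [0,T] → ℝⁿ be continuously differentiable in x, and suppose there exists ρ > 0 such that the matrix -ρI - (∂f/∂x + (∂f/∂x)ᵀ) is positive semidefinite at every (x,t). Then any two solutions x, x̂ of ẋ = f(x,t) satisfy ‖x̂(t) - x(t)‖ ≤ e^{-(ρ/2) t} ‖x̂(0) - x(0)‖ for all t ∈ [0,T]. -/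
theorem stmt_5 {n : ℕ} (T ρ : ℝ) (hT : 0 < T) (hρ : 0 < ρ)
    (f : EuclideanSpace ℝ (Fin n) → ℝ → EuclideanSpace ℝ (Fin n))
    (D : EuclideanSpace ℝ (Fin n) → ℝ →
      (EuclideanSpace ℝ (Fin n) →L[ℝ] EuclideanSpace ℝ (Fin n)))
    (hdiff : ∀ (x : EuclideanSpace ℝ (Fin n)) (t : ℝ), t ∈ Set.Icc 0 T →
      HasFDerivAt (fun y => f y t) (D x t) x)
    (hDcont : Continuous fun p : EuclideanSpace ℝ (Fin n) × ℝ => D p.1 p.2)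
    -- -ρI - (∂f/∂x + (∂f/∂x)ᵀ) ⪰ 0 :  vᵀ(Df + Dfᵀ)v = 2⟪Df v, v⟫ ≤ -ρ‖v‖²
    (hpsd : ∀ (x v : EuclideanSpace ℝ (Fin n)) (t : ℝ), t ∈ Set.Icc 0 T →
      0 ≤ -ρ * ‖v‖ ^ 2 - 2 * (inner ℝ (D x t v) v : ℝ))
    (x xh : ℝ → EuclideanSpace ℝ (Fin n))
    (hx : ∀ t ∈ Set.Icc 0 T, HasDerivAt x (f (x t) t) t)
    (hxh : ∀ t ∈ Set.Icc 0 T, HasDerivAt xh (f (xh t) t) t) :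
    ∀ t ∈ Set.Icc 0 T, ‖xh t - x t‖ ≤ Real.exp (-(ρ / 2) * t) * ‖xh 0 - x 0‖ := by
  set e : ℝ → EuclideanSpace ℝ (Fin n) := fun s => xh s - x s with he
  -- key inner-product estimate
  have hkey : ∀ s ∈ Set.Icc 0 T,
      (inner ℝ (f (xh s) s - f (x s) s) (e s) : ℝ) ≤ -(ρ / 2) * ‖e s‖ ^ 2 := by
    intro s hs
    set v : EuclideanSpace ℝ (Fin n) := e s with hv
    set g : ℝ → ℝ := fun u => (inner ℝ (f (x s + u • v) s) v : ℝ) with hgdef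
    have hg : ∀ u : ℝ,
        HasDerivAt g ((inner ℝ (D (x s + u • v) s v) v : ℝ)) u := by
      intro u
      have hγ : HasDerivAt (fun u : ℝ => x s + u • v) v u := by
        simpa using ((hasDerivAt_id u).smul_const v).const_add (x s)
      have hc : HasDerivAt (fun u : ℝ => f (x s + u • v) s) (D (x s + u • v) s v) u :=
        by have := (hdiff (x s + u • v) s hs).comp_hasDerivAt u hγ; exact this
      have := hc.inner ℝ (hasDerivAt_const u v)
      simpa using this
    have hb : ∀ y, (inner ℝ (D y s v) v : ℝ) ≤ -(ρ / 2) * ‖v‖ ^ 2 := by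
      intro y
      have := hpsd y v s hs
      nlinarith
    have hφ : ∀ u : ℝ, HasDerivAt (fun u => -(ρ / 2) * ‖v‖ ^ 2 * u - g u)
        (-(ρ / 2) * ‖v‖ ^ 2 - (inner ℝ (D (x s + u • v) s v) v : ℝ)) u := by
      intro u
      simpa only [id_eq, mul_one, Pi.sub_def] using
        ((hasDerivAt_id u).const_mul (-(ρ / 2) * ‖v‖ ^ 2)).sub (hg u)
    have hmono : Monotone (fun u => -(ρ / 2) * ‖v‖ ^ 2 * u - g u) := by
      apply monotone_of_deriv_nonneg
      · intro u; exact (hφ u).differentiableAt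
      · intro u
        rw [(hφ u).deriv]
        have := hb (x s + u • v)
        linarith
    have h01 := hmono (show (0 : ℝ) ≤ 1 by norm_num)
    have hg0 : g 0 = (inner ℝ (f (x s) s) v : ℝ) := by simp [hgdef]
    have hx1 : x s + (1 : ℝ) • v = xh s := by
      simp only [one_smul, hv, he]; abel
    have hg1 : g 1 = (inner ℝ (f (xh s) s) v : ℝ) := by
      simp only [hgdef, hx1]
    simp only [mul_zero, mul_one, hg0, hg1] at h01
    rw [inner_sub_left]
    linarith
  -- the Lyapunov function h(u) = exp(ρ u) ‖e u‖² is antitone on [0, T]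
  have hderivE : ∀ s ∈ Set.Icc 0 T, HasDerivAt e (f (xh s) s - f (x s) s) s :=
    fun s hs => (hxh s hs).sub (hx s hs)
  set h : ℝ → ℝ := fun u => Real.exp (ρ * u) * (inner ℝ (e u) (e u) : ℝ) with hhdef
  have hderivH : ∀ s ∈ Set.Icc 0 T, HasDerivAt h
      (ρ * Real.exp (ρ * s) * (inner ℝ (e s) (e s) : ℝ) +
        Real.exp (ρ * s) *
          ((inner ℝ (e s) (f (xh s) s - f (x s) s) : ℝ) +
            (inner ℝ (f (xh s) s - f (x s) s) (e s) : ℝ))) s := by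
    intro s hs
    have hexp : HasDerivAt (fun u => Real.exp (ρ * u)) (ρ * Real.exp (ρ * s)) s := by
      simpa [mul_comm, Function.comp_def] using (Real.hasDerivAt_exp (ρ * s)).comp s
        ((hasDerivAt_id s).const_mul ρ)
    have hinner := (hderivE s hs).inner ℝ (hderivE s hs)
    simpa [mul_comm, mul_assoc, mul_left_comm, hhdef, Pi.mul_def] using hexp.mul hinner
  have hH' : ∀ s ∈ Set.Icc 0 T,
      ρ * Real.exp (ρ * s) * (inner ℝ (e s) (e s) : ℝ) +
        Real.exp (ρ * s) *
          ((inner ℝ (e s) (f (xh s) s - f (x s) s) : ℝ) +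
            (inner ℝ (f (xh s) s - f (x s) s) (e s) : ℝ)) ≤ 0 := by
    intro s hs
    have h1 := hkey s hs
    have h2 : (inner ℝ (e s) (f (xh s) s - f (x s) s) : ℝ) =
        (inner ℝ (f (xh s) s - f (x s) s) (e s) : ℝ) := real_inner_comm _ _
    have h3 : (inner ℝ (e s) (e s) : ℝ) = ‖e s‖ ^ 2 := real_inner_self_eq_norm_sq _
    have h4 : (0 : ℝ) < Real.exp (ρ * s) := Real.exp_pos _
    rw [h2, h3]
    nlinarith
  have hanti : AntitoneOn h (Set.Icc 0 T) := by
    apply antitoneOn_of_deriv_nonpos (convex_Icc 0 T)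
    · intro s hs
      exact (hderivH s hs).continuousAt.continuousWithinAt
    · intro s hs
      rw [interior_Icc] at hs
      exact ((hderivH s (Set.mem_Icc_of_Ioo hs)).differentiableAt).differentiableWithinAt
    · intro s hs
      rw [interior_Icc] at hs
      have hs' := Set.mem_Icc_of_Ioo hs
      rw [(hderivH s hs').deriv]
      exact hH' s hs'
  -- conclude
  intro t ht
  have h0mem : (0 : ℝ) ∈ Set.Icc 0 T := ⟨le_refl 0, hT.le⟩
  have hle := hanti h0mem ht ht.1
  have h3 : ∀ u, (inner ℝ (e u) (e u) : ℝ) = ‖e u‖ ^ 2 := fun u =>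
    real_inner_self_eq_norm_sq _
  simp only [hhdef, mul_zero, Real.exp_zero, one_mul, h3] at hle
  -- hle : exp (ρ t) * ‖e t‖ ^ 2 ≤ ‖e 0‖ ^ 2
  have hsq : ‖e t‖ ^ 2 ≤ (Real.exp (-(ρ / 2) * t) * ‖e 0‖) ^ 2 := by
    have hexp2 : Real.exp (-(ρ / 2) * t) ^ 2 * Real.exp (ρ * t) = 1 := by
      rw [sq, ← Real.exp_add, ← Real.exp_add]
      ring_nf
      exact Real.exp_zero
    have h4 : (0 : ℝ) < Real.exp (ρ * t) := Real.exp_pos _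
    rw [mul_pow]
    nlinarith [sq_nonneg (Real.exp (-(ρ / 2) * t)), sq_nonneg (‖e t‖)]
  calc ‖xh t - x t‖ = ‖e t‖ := by rw [he]
    _ ≤ Real.exp (-(ρ / 2) * t) * ‖e 0‖ := by
        have hrhs : 0 ≤ Real.exp (-(ρ / 2) * t) * ‖e 0‖ := by positivity
        nlinarith [norm_nonneg (e t)]
    _ = Real.exp (-(ρ / 2) * t) * ‖xh 0 - x 0‖ := by rw [he]
end

section
/- Let W be an n×n real matrix, ρ > 0, 0 < κ̲ ≤ κ̄, and suppose for every i that ρ + 2(κ̲ + κ̄)W_{ii} + κ̄ Σ_{j=1}^n (|W_{ij}| + |W_{ji}|) < 0. Then for any diagonal matrix J with J_{ii} ∈ [κ̲, κ̄] for all i, the smallest eigenvalue of the symmetric matrix -ρI - JW - WᵀJ is strictly positive. -/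
open Finset Matrix

theorem stmt_10 {n : ℕ} (W : Matrix (Fin n) (Fin n) ℝ) (ρ κl κu : ℝ)
    (hρ : 0 < ρ) (hκl : 0 < κl) (hκ : κl ≤ κu)
    (hW : ∀ i, ρ + 2 * (κl + κu) * W i i + κu * ∑ j, (|W i j| + |W j i|) < 0) :
    ∀ J : Matrix (Fin n) (Fin n) ℝ, (∀ i j, i ≠ j → J i j = 0) →
      (∀ i, J i i ∈ Set.Icc κl κu) →
      ∀ (hM : ((-ρ) • (1 : Matrix (Fin n) (Fin n) ℝ) - J * W - Wᵀ * J).IsHermitian)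
        (i : Fin n), 0 < hM.eigenvalues i := by
  intro J hJ hJd hM i
  set A : Matrix (Fin n) (Fin n) ℝ := (-ρ) • (1 : Matrix (Fin n) (Fin n) ℝ) - J * W - Wᵀ * J with hA
  -- entries of A
  have hAentry : ∀ a b : Fin n, A a b =
      (if a = b then -ρ else 0) - J a a * W a b - W b a * J b b := by
    intro a b
    have h1 : (J * W) a b = J a a * W a b := by
      rw [Matrix.mul_apply]
      rw [Finset.sum_eq_single a]
      · intro c _ hc; rw [hJ a c (Ne.symm hc)]; ring
      · simp
    have h2 : (Wᵀ * J) a b = W b a * J b b := by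
      rw [Matrix.mul_apply]
      rw [Finset.sum_eq_single b]
      · rfl
      · intro c _ hc; rw [hJ c b hc]; ring
      · simp
    simp only [hA, Matrix.sub_apply, Matrix.smul_apply, Matrix.one_apply, h1, h2, smul_eq_mul]
    split_ifs <;> ring
  -- eigenvalue via Gershgorin
  have hev : Module.End.HasEigenvalue (Matrix.toLin' A) (hM.eigenvalues i) := by
    apply Module.End.hasEigenvalue_of_hasEigenvector (x := fun j => hM.eigenvectorBasis i j)
    refine ⟨Module.End.mem_eigenspace_iff.2 ?_, ?_⟩
    · have := hM.mulVec_eigenvectorBasis i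
      simpa [Matrix.toLin'_apply] using this
    · intro h
      apply hM.eigenvectorBasis.orthonormal.ne_zero i
      ext j
      exact congrFun h j
  obtain ⟨k, hk⟩ := eigenvalue_mem_ball hev
  rw [Metric.mem_closedBall, Real.dist_eq] at hk
  have hlow : A k k - ∑ j ∈ Finset.univ.erase k, ‖A k j‖ ≤ hM.eigenvalues i := by
    have := abs_le.1 hk
    linarith [this.1]
  refine lt_of_lt_of_le ?_ hlow
  -- bound the off-diagonal sum
  have hoff : ∀ j ∈ Finset.univ.erase k, ‖A k j‖ ≤ κu * (|W k j| + |W j k|) := by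
    intro j hj
    have hjk : k ≠ j := fun h => (Finset.mem_erase.1 hj).1 h.symm
    rw [hAentry k j, if_neg hjk]
    have hk1 := hJd k; have hk2 := hJd j
    rw [Set.mem_Icc] at hk1 hk2
    have heq : (0:ℝ) - J k k * W k j - W j k * J j j
        = (-(J k k * W k j)) + (-(W j k * J j j)) := by ring
    rw [heq, Real.norm_eq_abs]
    refine ((abs_add_le _ _).trans (by rw [abs_neg, abs_neg])).trans ?_
    rw [abs_mul, abs_mul]
    have h1 : |J k k| ≤ κu := abs_le.2 ⟨by linarith, hk1.2⟩
    have h2 : |J j j| ≤ κu := abs_le.2 ⟨by linarith, hk2.2⟩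
    nlinarith [abs_nonneg (W k j), abs_nonneg (W j k), abs_nonneg (J k k), abs_nonneg (J j j)]
  have hsum : ∑ j ∈ Finset.univ.erase k, ‖A k j‖
      ≤ ∑ j ∈ Finset.univ.erase k, κu * (|W k j| + |W j k|) :=
    Finset.sum_le_sum hoff
  have hsplit : ∑ j, κu * (|W k j| + |W j k|)
      = κu * (|W k k| + |W k k|) + ∑ j ∈ Finset.univ.erase k, κu * (|W k j| + |W j k|) :=
    (Finset.add_sum_erase _ _ (Finset.mem_univ k)).symm
  have hS : (∑ j, κu * (|W k j| + |W j k|)) = κu * ∑ j, (|W k j| + |W j k|) := by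
    rw [Finset.mul_sum]
  have hWk := hW k
  have hk1 := hJd k
  rw [Set.mem_Icc] at hk1
  have hAkk : A k k = -ρ - 2 * J k k * W k k := by
    rw [hAentry k k, if_pos rfl]; ring
  have habs1 : W k k ≤ |W k k| := le_abs_self _
  have habs2 : -W k k ≤ |W k k| := neg_le_abs _
  -- final arithmetic
  have key : 0 < A k k - ∑ j ∈ Finset.univ.erase k, κu * (|W k j| + |W j k|) := by
    rw [hAkk]
    have : ∑ j ∈ Finset.univ.erase k, κu * (|W k j| + |W j k|)
        = κu * (∑ j, (|W k j| + |W j k|)) - κu * (|W k k| + |W k k|) := by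
      rw [← hS, hsplit]; ring
    rw [this]
    nlinarith [hk1.1, hk1.2, abs_nonneg (W k k)]
  linarith [key, hsum]
end
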